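/- For every composition s = (s(1),…,s(a)), the set of s-trees is in bijection with the set of complete noncrossing s-matchings; in particular these two sets have the same cardinality. -/

import Mathlib

/-- A planar rooted tree: a root together with a (possibly empty) ordered list of subtrees. -/
inductive PTree : Type where
  | node : List PTree → PTree

namespace PTree

/-- The signature of a planar rooted tree: the numbers of children of its internal
nodes, listed in preorder. -/
def signature : PTree → List ℕ
  | node [] => []
  | node (t :: ts) =>
    (t :: ts).length :: ((t :: ts).attach.map (fun x => signature x.1)).flatten
decreasing_by
  have := List.sizeOf_lt_of_mem x.2
  simp at this ⊢
  omega

/-- The preorder word of a planar rooted tree: `true` (= N) for each internal node and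
`false` (= E) for each leaf, nodes listed in preorder. -/
def word : PTree → List Bool
  | node ts => (!ts.isEmpty) :: (ts.attach.map (fun x => word x.1)).flatten
decreasing_by
  have := List.sizeOf_lt_of_mem x.2
  simp at this ⊢
  omega

end PTree

namespace PTree

theorem strongInd (motive : PTree → Prop)
    (h : ∀ ts : List PTree, (∀ t ∈ ts, motive t) → motive (PTree.node ts)) :
    ∀ T, motive T
  | .node ts => h ts (fun t _ht => strongInd motive h t)
decreasing_by
  have := List.sizeOf_lt_of_mem _ht
  simp at this ⊢
  omega

mutual
def tsize : PTree → ℕ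
  | .node ts => 1 + tsizeL ts
def tsizeL : List PTree → ℕ
  | [] => 0
  | t :: ts => tsize t + tsizeL ts
end

def chPos : List PTree → ℕ → List ℕ
  | [], _ => []
  | t :: ts, o => o :: chPos ts (o + tsize t)

mutual
def blocks : PTree → ℕ → List (Finset ℕ)
  | .node [], _ => []
  | .node (t :: ts), o => (chPos (t :: ts) (o+1)).toFinset :: blocksL (t :: ts) (o+1)
def blocksL : List PTree → ℕ → List (Finset ℕ)
  | [], _ => []
  | t :: ts, o => blocks t o ++ blocksL ts (o + tsize t)
end

theorem tsize_pos (t : PTree) : 1 ≤ tsize t := by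
  obtain ⟨ts⟩ := t; simp [tsize]

theorem chPos_mem {ts : List PTree} {o x : ℕ} (h : x ∈ chPos ts o) :
    o ≤ x ∧ x < o + tsizeL ts := by
  induction ts generalizing o with
  | nil => simp [chPos] at h
  | cons t ts ih =>
    simp only [chPos, List.mem_cons] at h
    have h1 := tsize_pos t
    rcases h with rfl | h
    · simp [tsizeL]; omega
    · have := ih h; simp [tsizeL] at this ⊢; omega

theorem chPos_sorted (ts : List PTree) (o : ℕ) : (chPos ts o).Pairwise (· < ·) := by
  induction ts generalizing o with
  | nil => simp [chPos]
  | cons t ts ih =>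
    simp only [chPos, List.pairwise_cons]
    refine ⟨fun x hx => ?_, ih _⟩
    have := (chPos_mem hx).1
    have := tsize_pos t
    omega

/-- union of a list of finsets -/
def unionL (L : List (Finset ℕ)) : Finset ℕ := L.foldr (· ∪ ·) ∅

@[simp] theorem unionL_nil : unionL [] = ∅ := rfl
@[simp] theorem unionL_cons (B : Finset ℕ) (L : List (Finset ℕ)) :
    unionL (B :: L) = B ∪ unionL L := rfl

theorem unionL_append (L M : List (Finset ℕ)) :
    unionL (L ++ M) = unionL L ∪ unionL M := by
  induction L with
  | nil => simp
  | cons B L ih => simp [ih, Finset.union_assoc]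

theorem mem_unionL {L : List (Finset ℕ)} {x : ℕ} :
    x ∈ unionL L ↔ ∃ B ∈ L, x ∈ B := by
  induction L with
  | nil => simp
  | cons B L ih => simp [ih]

theorem subset_unionL {L : List (Finset ℕ)} {B : Finset ℕ} (h : B ∈ L) : B ⊆ unionL L :=
  fun x hx => mem_unionL.2 ⟨B, h, hx⟩

theorem unionL_blocksL (ts : List PTree)
    (IH : ∀ t ∈ ts, ∀ o, unionL (blocks t o) = Finset.Ico (o+1) (o + tsize t)) (o : ℕ) :
    (chPos ts o).toFinset ∪ unionL (blocksL ts o) = Finset.Ico o (o + tsizeL ts) := by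
  induction ts generalizing o with
  | nil => simp [chPos, blocksL, tsizeL]
  | cons t ts ih =>
    have h1 := tsize_pos t
    simp only [chPos, blocksL, List.toFinset_cons, unionL_append, tsizeL]
    have hrec := ih (fun t ht => IH t (List.mem_cons_of_mem _ ht)) (o + tsize t)
    have ht := IH t List.mem_cons_self o
    rw [show insert o ((chPos ts (o + tsize t)).toFinset) ∪ (unionL (blocks t o) ∪ unionL (blocksL ts (o + tsize t)))
      = (insert o (unionL (blocks t o))) ∪ ((chPos ts (o + tsize t)).toFinset ∪ unionL (blocksL ts (o + tsize t))) by
        simp [Finset.union_assoc, Finset.union_left_comm, Finset.union_comm, Finset.insert_union]]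
    rw [hrec, ht, Finset.insert_Ico_add_one_left_eq_Ico (by omega)]
    rw [Finset.Ico_union_Ico_eq_Ico (by omega) (by omega)]
    ring_nf

theorem unionL_blocks (t : PTree) : ∀ o : ℕ,
    unionL (blocks t o) = Finset.Ico (o+1) (o + tsize t) := by
  induction t using strongInd with
  | h ts IH =>
    intro o
    match ts, IH with
    | [], _ => simp [blocks, tsize, tsizeL]
    | t :: ts, IH =>
      have := unionL_blocksL (t :: ts) IH (o+1)
      simp only [blocks, unionL_cons, tsize]
      rw [this]
      congr 1
      omega

theorem blocks_subset {t : PTree} {o : ℕ} {B : Finset ℕ} (h : B ∈ blocks t o) :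
    B ⊆ Finset.Ico (o+1) (o + tsize t) := by
  rw [← unionL_blocks]; exact subset_unionL h

theorem blocksL_subset {ts : List PTree} {o : ℕ} {B : Finset ℕ} (h : B ∈ blocksL ts o) :
    B ⊆ Finset.Ico (o+1) (o + tsizeL ts) := by
  induction ts generalizing o with
  | nil => simp [blocksL] at h
  | cons t ts ih =>
    have h1 := tsize_pos t
    have h2 : (0:ℕ) ≤ tsizeL ts := Nat.zero_le _
    simp only [blocksL, List.mem_append] at h
    rcases h with h | h
    · exact (blocks_subset h).trans (Finset.Ico_subset_Ico (le_refl _) (by simp [tsizeL]))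
    · exact (ih h).trans (Finset.Ico_subset_Ico (by omega) (by simp [tsizeL]; omega))

theorem blocksL_nonempty {ts : List PTree}
    (IH : ∀ t ∈ ts, ∀ (o : ℕ) (B : Finset ℕ), B ∈ blocks t o → B.Nonempty) :
    ∀ {o : ℕ} {B : Finset ℕ}, B ∈ blocksL ts o → B.Nonempty := by
  induction ts with
  | nil => intro o B h; simp [blocksL] at h
  | cons t ts ih =>
    intro o B h
    simp only [blocksL, List.mem_append] at h
    rcases h with h | h
    · exact IH t (by simp) _ _ h
    · exact ih (fun t ht => IH t (by simp [ht])) h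

theorem blocks_nonempty {t : PTree} : ∀ {o : ℕ} {B : Finset ℕ}, B ∈ blocks t o → B.Nonempty := by
  induction t using strongInd with
  | h ts IH =>
    intro o B h
    match ts, IH, h with
    | t :: ts, IH, h =>
      rw [blocks] at h
      rcases List.mem_cons.1 h with rfl | h
      · exact ⟨o+1, by simp [chPos]⟩
      · exact blocksL_nonempty (fun u hu o B hB => IH u hu hB) h

theorem chPos_not_mem_blocksL {ts : List PTree} {o : ℕ} :
    ∀ x ∈ chPos ts o, ∀ B ∈ blocksL ts o, x ∉ B := by
  induction ts generalizing o with
  | nil => intro x hx; simp [chPos] at hx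
  | cons t ts ih =>
    intro x hx B hB hxB
    have h1 := tsize_pos t
    simp only [chPos, List.mem_cons] at hx
    simp only [blocksL, List.mem_append] at hB
    rcases hx with rfl | hx
    · rcases hB with hB | hB
      · have := blocks_subset hB hxB; simp [Finset.mem_Ico] at this
      · have := blocksL_subset hB hxB; simp [Finset.mem_Ico] at this
    · have hx1 := chPos_mem hx
      rcases hB with hB | hB
      · have := blocks_subset hB hxB; simp [Finset.mem_Ico] at this; omega
      · exact ih x hx B hB hxB

/-- helper: two finsets included in ranges with a separation point are disjoint -/
theorem disjoint_of_sep {B C : Finset ℕ} {c : ℕ} (hB : ∀ x ∈ B, x < c) (hC : ∀ x ∈ C, c ≤ x) :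
    Disjoint B C := by
  rw [Finset.disjoint_left]
  intro x hxB hxC
  exact absurd (hC x hxC) (by simpa using hB x hxB)

theorem pd_blocksL {ts : List PTree}
    (IH : ∀ t ∈ ts, ∀ o : ℕ, (blocks t o).Pairwise (fun B C => Disjoint B C)) :
    ∀ o : ℕ, (blocksL ts o).Pairwise (fun B C => Disjoint B C) := by
  induction ts with
  | nil => intro o; simp [blocksL]
  | cons t ts ih =>
    intro o
    rw [blocksL, List.pairwise_append]
    refine ⟨IH t (by simp) o, ih (fun u hu => IH u (by simp [hu])) _, ?_⟩
    intro B hB C hC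
    refine disjoint_of_sep (c := o + tsize t) (fun x hx => ?_) (fun x hx => ?_)
    · have := blocks_subset hB hx; simp [Finset.mem_Ico] at this; omega
    · have := blocksL_subset hC hx; simp [Finset.mem_Ico] at this; omega

theorem pd_blocks (t : PTree) : ∀ o : ℕ, (blocks t o).Pairwise (fun B C => Disjoint B C) := by
  induction t using strongInd with
  | h ts IH =>
    intro o
    match ts, IH with
    | [], _ => simp [blocks]
    | t :: ts, IH =>
      rw [blocks, List.pairwise_cons]
      refine ⟨?_, pd_blocksL IH (o+1)⟩
      intro C hC
      rw [Finset.disjoint_left]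
      intro x hx hxC
      rw [List.mem_toFinset] at hx
      exact chPos_not_mem_blocksL x hx C hC hxC

/-- the "strict order" relation between blocks used for sortedness -/
def SR (B C : Finset ℕ) : Prop := ∃ x ∈ B, ∀ y ∈ C, x < y

theorem sr_blocksL {ts : List PTree}
    (IH : ∀ t ∈ ts, ∀ o : ℕ, (blocks t o).Pairwise SR) :
    ∀ o : ℕ, (blocksL ts o).Pairwise SR := by
  induction ts with
  | nil => intro o; simp [blocksL]
  | cons t ts ih =>
    intro o
    rw [blocksL, List.pairwise_append]
    refine ⟨IH t (by simp) o, ih (fun u hu => IH u (by simp [hu])) _, ?_⟩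
    intro B hB C hC
    obtain ⟨x, hx⟩ := blocks_nonempty hB
    refine ⟨x, hx, fun y hy => ?_⟩
    have h1 := blocks_subset hB hx
    have h2 := blocksL_subset hC hy
    simp [Finset.mem_Ico] at h1 h2
    omega

theorem sr_blocks (t : PTree) : ∀ o : ℕ, (blocks t o).Pairwise SR := by
  induction t using strongInd with
  | h ts IH =>
    intro o
    match ts, IH with
    | [], _ => simp [blocks]
    | t :: ts, IH =>
      rw [blocks, List.pairwise_cons]
      refine ⟨?_, sr_blocksL IH (o+1)⟩
      intro C hC
      refine ⟨o+1, by simp [chPos], fun y hy => ?_⟩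
      have := blocksL_subset hC hy
      simp [Finset.mem_Ico] at this
      omega

def Cross (B C : Finset ℕ) : Prop :=
  ∃ x y z w : ℕ, x < y ∧ y < z ∧ z < w ∧ x ∈ B ∧ z ∈ B ∧ y ∈ C ∧ w ∈ C

def NCL (L : List (Finset ℕ)) : Prop :=
  ∀ B ∈ L, ∀ C ∈ L, B ≠ C → ¬ Cross B C

theorem sep_no_cross {B C : Finset ℕ} {a b : ℕ} (hB : ∀ x ∈ B, a < x ∧ x < b)
    (hC : ∀ y ∈ C, y ≤ a ∨ b ≤ y) : ¬ Cross B C ∧ ¬ Cross C B := by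
  constructor
  · rintro ⟨x, y, z, w, h1, h2, h3, hx, hz, hy, hw⟩
    have := hB x hx; have := hB z hz; have := hC y hy; omega
  · rintro ⟨x, y, z, w, h1, h2, h3, hx, hz, hy, hw⟩
    have := hB y hy; have := hB w hw; have := hC x hx; have := hC z hz; omega

theorem ncl_append {L M : List (Finset ℕ)} (hL : NCL L) (hM : NCL M)
    (h : ∀ B ∈ L, ∀ C ∈ M, ¬ Cross B C ∧ ¬ Cross C B) : NCL (L ++ M) := by
  intro B hB C hC hne
  rcases List.mem_append.1 hB with hB | hB <;> rcases List.mem_append.1 hC with hC | hC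
  · exact hL B hB C hC hne
  · exact (h B hB C hC).1
  · exact (h C hC B hB).2
  · exact hM B hB C hC hne

theorem ncl_sublist {L M : List (Finset ℕ)} (h : L ⊆ M) (hM : NCL M) : NCL L :=
  fun B hB C hC hne => hM B (h hB) C (h hC) hne

theorem ncl_blocksL {ts : List PTree}
    (IH : ∀ t ∈ ts, ∀ o : ℕ, NCL (blocks t o)) :
    ∀ o : ℕ, NCL (blocksL ts o) ∧
      ∀ C ∈ blocksL ts o, ∃ a b : ℕ, o ≤ a ∧ b ≤ o + tsizeL ts ∧
        (∀ y ∈ C, a < y ∧ y < b) ∧ (∀ x ∈ chPos ts o, x ≤ a ∨ b ≤ x) := by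
  induction ts with
  | nil =>
    intro o
    refine ⟨by simp [blocksL, NCL], fun C hC => by simp [blocksL] at hC⟩
  | cons t ts ih =>
    intro o
    obtain ⟨ih1, ih2⟩ := ih (fun u hu => IH u (by simp [hu])) (o + tsize t)
    have h1 := tsize_pos t
    constructor
    · rw [blocksL]
      refine ncl_append (IH t (by simp) o) ih1 ?_
      intro B hB C hC
      refine sep_no_cross (a := o) (b := o + tsize t) (fun x hx => ?_) (fun y hy => ?_)
      · have := blocks_subset hB hx; simp [Finset.mem_Ico] at this; omega
      · have := blocksL_subset hC hy; simp [Finset.mem_Ico] at this; omega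
    · intro C hC
      rw [blocksL, List.mem_append] at hC
      rcases hC with hC | hC
      · refine ⟨o, o + tsize t, le_refl _, by simp [tsizeL], fun y hy => ?_, fun x hx => ?_⟩
        · have := blocks_subset hC hy; simp [Finset.mem_Ico] at this; omega
        · simp only [chPos, List.mem_cons] at hx
          rcases hx with rfl | hx
          · omega
          · have := chPos_mem hx; omega
      · obtain ⟨a, b, ha, hb, hy, hx⟩ := ih2 C hC
        refine ⟨a, b, by omega, by simp [tsizeL]; omega, hy, fun x hx' => ?_⟩
        simp only [chPos, List.mem_cons] at hx'
        rcases hx' with rfl | hx'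
        · omega
        · exact hx x hx'

theorem ncl_blocks (t : PTree) : ∀ o : ℕ, NCL (blocks t o) := by
  induction t using strongInd with
  | h ts IH =>
    intro o
    match ts, IH with
    | [], _ => simp [blocks, NCL]
    | t :: ts, IH =>
      obtain ⟨h1, h2⟩ := ncl_blocksL IH (o+1)
      rw [blocks]
      intro B hB C hC hne
      rcases List.mem_cons.1 hB with rfl | hB <;> rcases List.mem_cons.1 hC with hC | hC
      · exact absurd hC.symm hne
      · obtain ⟨a, b, _, _, hy, hx⟩ := h2 C hC
        exact (sep_no_cross hy (fun x hx' => hx x (List.mem_toFinset.1 hx'))).2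
      · subst hC
        obtain ⟨a, b, _, _, hy, hx⟩ := h2 B hB
        exact (sep_no_cross hy (fun x hx' => hx x (List.mem_toFinset.1 hx'))).1
      · exact h1 B hB C hC hne

theorem signature_cons (t : PTree) (ts : List PTree) :
    signature (node (t :: ts)) = (ts.length + 1) :: ((t :: ts).map signature).flatten := by
  rw [signature]
  simp [List.attach_map_val]

theorem chPos_length (ts : List PTree) (o : ℕ) : (chPos ts o).length = ts.length := by
  induction ts generalizing o with
  | nil => simp [chPos]
  | cons t ts ih => simp [chPos, ih]

theorem chPos_nodup (ts : List PTree) (o : ℕ) : (chPos ts o).Nodup :=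
  (chPos_sorted ts o).nodup

theorem card_blocksL {ts : List PTree}
    (IH : ∀ t ∈ ts, ∀ o : ℕ, (blocks t o).map Finset.card = signature t) :
    ∀ o : ℕ, (blocksL ts o).map Finset.card = (ts.map signature).flatten := by
  induction ts with
  | nil => intro o; simp [blocksL]
  | cons t ts ih =>
    intro o
    simp only [blocksL, List.map_append, List.map_cons, List.flatten_cons]
    rw [IH t (by simp) o, ih (fun u hu => IH u (by simp [hu])) _]

theorem card_blocks (t : PTree) : ∀ o : ℕ, (blocks t o).map Finset.card = signature t := by
  induction t using strongInd with
  | h ts IH =>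
    intro o
    match ts, IH with
    | [], _ => simp [blocks, signature]
    | t :: ts, IH =>
      rw [blocks, signature_cons, List.map_cons, card_blocksL IH]
      congr 1
      rw [List.toFinset_card_of_nodup (chPos_nodup _ _), chPos_length]
      simp

theorem tsize_eq (t : PTree) : tsize t = (signature t).sum + 1 := by
  induction t using strongInd with
  | h ts IH =>
    match ts, IH with
    | [], _ => simp [tsize, tsizeL, signature]
    | t :: ts, IH =>
      rw [tsize, signature_cons]
      have : ∀ us : List PTree, (∀ u ∈ us, tsize u = (signature u).sum + 1) →
          tsizeL us = ((us.map signature).flatten).sum + us.length := by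
        intro us h
        induction us with
        | nil => simp [tsizeL]
        | cons u us ihu =>
          rw [tsizeL, h u (by simp), ihu (fun v hv => h v (by simp [hv]))]
          simp; omega
      rw [this (t :: ts) IH]
      simp; omega

theorem append_split {L1 L2 M1 M2 : List (Finset ℕ)} {c : ℕ}
    (h : L1 ++ L2 = M1 ++ M2)
    (hL1 : ∀ B ∈ L1, ∀ x ∈ B, x < c) (hL2 : ∀ B ∈ L2, ∀ x ∈ B, c ≤ x)
    (hM1 : ∀ B ∈ M1, ∀ x ∈ B, x < c) (hM2 : ∀ B ∈ M2, ∀ x ∈ B, c ≤ x)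
    (hne : ∀ B ∈ L1 ++ L2, B.Nonempty) (hne' : ∀ B ∈ M1 ++ M2, B.Nonempty) :
    L1 = M1 ∧ L2 = M2 := by
  induction L1 generalizing M1 with
  | nil =>
    cases M1 with
    | nil => simpa using h
    | cons B M1 =>
      exfalso
      have hB : B ∈ L2 := by
        have : L2 = B :: (M1 ++ M2) := by simpa using h
        rw [this]; simp
      obtain ⟨x, hx⟩ := hne' B (by simp)
      exact absurd (hL2 B hB x hx) (by simpa using hM1 B (by simp) x hx)
  | cons B L1 ih =>
    cases M1 with
    | nil =>
      exfalso
      have hB : B ∈ M2 := by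
        have : M2 = B :: (L1 ++ L2) := by simpa using h.symm
        rw [this]; simp
      obtain ⟨x, hx⟩ := hne B (by simp)
      exact absurd (hM2 B hB x hx) (by simpa using hL1 B (by simp) x hx)
    | cons B' M1 =>
      simp only [List.cons_append, List.cons.injEq] at h
      obtain ⟨rfl, h⟩ := h
      obtain ⟨h1, h2⟩ := ih h (fun C hC => hL1 C (by simp [hC]))
        (fun C hC => hM1 C (by simp [hC]))
        (fun C hC => hne C (by simp [List.mem_append] at hC ⊢; tauto))
        (fun C hC => hne' C (by simp [List.mem_append] at hC ⊢; tauto))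
      exact ⟨by rw [h1], h2⟩

theorem blocksL_nonempty' {ts : List PTree} {o : ℕ} {B : Finset ℕ} (h : B ∈ blocksL ts o) :
    B.Nonempty :=
  blocksL_nonempty (fun _ _ _ _ h' => blocks_nonempty h') h

theorem blocks_inj : ∀ t : PTree, ∀ t' o, blocks t o = blocks t' o → t = t' := by
  intro t
  induction t using strongInd with
  | h ts IH =>
    have aux : ∀ us : List PTree, (∀ u ∈ us, ∀ u' o, blocks u o = blocks u' o → u = u') →
        ∀ us' o, chPos us o = chPos us' o → blocksL us o = blocksL us' o → us = us' := by
      intro us h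
      induction us with
      | nil =>
        intro us' o hc hb
        cases us' with
        | nil => rfl
        | cons u' us' => simp [chPos] at hc
      | cons u us ihu =>
        intro us' o hc hb
        cases us' with
        | nil => simp [chPos] at hc
        | cons u' us' =>
          simp only [chPos, List.cons.injEq, true_and] at hc
          rw [blocksL] at hb
          rw [blocksL] at hb
          cases us with
          | nil =>
            cases us' with
            | nil =>
              rw [blocksL, blocksL, List.append_nil, List.append_nil] at hb
              rw [h u (by simp) u' o hb]
            | cons v vs =>
              exfalso; have := congrArg List.length hc
              simp [chPos_length, chPos] at this
          | cons v vs =>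
            cases us' with
            | nil =>
              exfalso; have := congrArg List.length hc
              simp [chPos_length, chPos] at this
            | cons v' vs' =>
              have hsz : tsize u = tsize u' := by
                have hc' := hc
                simp only [chPos, List.cons.injEq] at hc'
                omega
              rw [← hsz] at hb hc
              have hs := append_split (c := o + tsize u) hb
                (fun B hB x hx => by have := blocks_subset hB hx; simp [Finset.mem_Ico] at this; omega)
                (fun B hB x hx => by have := blocksL_subset hB hx; simp [Finset.mem_Ico] at this; omega)
                (fun B hB x hx => by have := blocks_subset hB hx; simp [Finset.mem_Ico] at this; omega)
                (fun B hB x hx => by have := blocksL_subset hB hx; simp [Finset.mem_Ico] at this; omega)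
                (fun B hB => by rw [List.mem_append] at hB
                                rcases hB with hB | hB
                                · exact blocks_nonempty hB
                                · exact blocksL_nonempty' hB)
                (fun B hB => by rw [List.mem_append] at hB
                                rcases hB with hB | hB
                                · exact blocks_nonempty hB
                                · exact blocksL_nonempty' hB)
              obtain ⟨h1, h2⟩ := hs
              have heq : u = u' := h u (by simp) u' o h1
              have : (v :: vs) = (v' :: vs') :=
                ihu (fun w hw => h w (by simp [hw])) _ (o + tsize u) hc h2
              rw [heq, this]
    intro t' o hb
    cases t' with
    | node ts' =>
      cases ts with
      | nil =>
        cases ts' with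
        | nil => rfl
        | cons u' us' => rw [blocks, blocks] at hb; simp at hb
      | cons u us =>
        cases ts' with
        | nil => rw [blocks, blocks] at hb; simp at hb
        | cons u' us' =>
          rw [blocks, blocks] at hb
          simp only [List.cons.injEq] at hb
          obtain ⟨hc, hb⟩ := hb
          have hcp : chPos (u :: us) (o+1) = chPos (u' :: us') (o+1) := by
            have n1 := chPos_nodup (u :: us) (o+1)
            have n2 := chPos_nodup (u' :: us') (o+1)
            have s1 := chPos_sorted (u :: us) (o+1)
            have s2 := chPos_sorted (u' :: us') (o+1)
            refine List.Perm.eq_of_pairwise' s1 s2 ?_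
            have := List.toFinset_eq_iff_perm_dedup.1 hc
            rwa [n1.dedup, n2.dedup] at this
          have := aux (u :: us) IH (u' :: us') (o+1) hcp hb
          rw [this]

def Cond (o m : ℕ) (L : List (Finset ℕ)) : Prop :=
  (∀ B ∈ L, B.Nonempty) ∧ L.Pairwise (fun B C => Disjoint B C) ∧
  unionL L = Finset.Ico (o+1) (o+1+m) ∧
  L.Pairwise (fun B C => B.min < C.min) ∧ NCL L

theorem inner (M : ℕ)
    (H : ∀ m o L, m < M → Cond o m L → ∃ t, tsize t = m + 1 ∧ blocks t o = L) :
    ∀ (q : List ℕ) (o e : ℕ) (L : List (Finset ℕ)),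
    ((o :: q).Pairwise (· < ·)) →
    (∀ x ∈ o :: q, x < e) →
    (e ≤ o + M) →
    (∀ B ∈ L, B.Nonempty) →
    L.Pairwise (fun B C => Disjoint B C) →
    ((o :: q).toFinset ∪ unionL L = Finset.Ico o e) →
    (∀ B ∈ L, ∀ x ∈ o :: q, x ∉ B) →
    L.Pairwise (fun B C => B.min < C.min) →
    NCL L →
    (∀ C ∈ L, ∀ y ∈ C, ∀ w ∈ C, ∀ p ∈ o :: q, ¬(y < p ∧ p < w)) →
    ∃ ts, chPos ts o = o :: q ∧ blocksL ts o = L ∧ o + tsizeL ts = e := by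
  intro q
  induction q with
  | nil =>
    intro o e L hsort he hM hne hdisj huni hdisj2 hmins hncl hgap
    have hoe : o < e := he o (by simp)
    have hsubU : unionL L ⊆ Finset.Ico o e := by
      rw [← huni]; exact Finset.subset_union_right
    have hU : unionL L = Finset.Ico (o+1) e := by
      apply Finset.ext
      intro x
      simp only [Finset.mem_Ico]
      constructor
      · intro hx
        have h1 := hsubU hx
        simp only [Finset.mem_Ico] at h1
        obtain ⟨B, hB, hxB⟩ := mem_unionL.1 hx
        have h2 := hdisj2 B hB o (by simp)
        have : x ≠ o := fun h => h2 (h ▸ hxB)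
        omega
      · intro hx
        have : x ∈ Finset.Ico o e := by simp only [Finset.mem_Ico]; omega
        rw [← huni] at this
        rcases Finset.mem_union.1 this with h | h
        · simp at h; omega
        · exact h
    obtain ⟨t, ht1, ht2⟩ := H (e - o - 1) o L (by omega)
      ⟨hne, hdisj, by rw [hU]; congr 1; omega, hmins, hncl⟩
    refine ⟨[t], ?_, ?_, ?_⟩
    · simp [chPos]
    · rw [blocksL, ht2]
      simp [blocksL]
    · rw [tsizeL, tsizeL, ht1]; omega
  | cons pp qq ih =>
    intro o e L hsort he hM hne hdisj huni hdisj2 hmins hncl hgap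
    have hop : o < pp := by
      rcases List.pairwise_cons.1 hsort with ⟨h, -⟩; exact h pp (by simp)
    have hpe : pp < e := he pp (by simp)
    have hqlb : ∀ x ∈ qq, pp < x := by
      intro x hx
      rcases List.pairwise_cons.1 hsort with ⟨-, h⟩
      rcases List.pairwise_cons.1 h with ⟨h2, -⟩
      exact h2 x hx
    set pred : Finset ℕ → Bool := fun C => decide (C.min < (pp : WithTop ℕ)) with hpred
    set L1 := L.takeWhile pred with hL1def
    set L2 := L.dropWhile pred with hL2def
    have hsplit : L1 ++ L2 = L := by rw [hL1def, hL2def]; exact List.takeWhile_append_dropWhile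
    have hsub1 : ∀ C ∈ L1, C ∈ L := fun C hC => (List.takeWhile_sublist pred).subset hC
    have hsub2 : ∀ C ∈ L2, C ∈ L := fun C hC => (List.dropWhile_sublist pred).subset hC
    have hLU : ∀ C ∈ L, ∀ y ∈ C, o < y ∧ y < e := by
      intro C hC y hy
      have h1 : y ∈ unionL L := mem_unionL.2 ⟨C, hC, hy⟩
      have h2 : y ∈ Finset.Ico o e := by rw [← huni]; exact Finset.mem_union_right _ h1
      simp only [Finset.mem_Ico] at h2
      have h3 := hdisj2 C hC o (by simp)
      have : y ≠ o := fun h => h3 (h ▸ hy)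
      omega
    have hA : ∀ C ∈ L1, ∀ y ∈ C, o < y ∧ y < pp := by
      intro C hC y hy
      have hCL := hsub1 C hC
      refine ⟨(hLU C hCL y hy).1, ?_⟩
      by_contra hge
      push_neg at hge
      have hyp : y ≠ pp := fun h => hdisj2 C hCL pp (by simp) (h ▸ hy)
      have hp : C.min < (pp : WithTop ℕ) := by
        have := List.mem_takeWhile_imp hC
        simpa [hpred] using this
      have hCne : C.Nonempty := hne C hCL
      have hmin : C.min' hCne ∈ C := Finset.min'_mem _ _
      have hminlt : C.min' hCne < pp := by
        have hcm := Finset.coe_min' hCne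
        rw [← hcm] at hp
        exact WithTop.coe_lt_coe.1 hp
      exact hgap C hCL (C.min' hCne) hmin y hy pp (by simp) ⟨hminlt, by omega⟩
    have hnotpred : ∀ C ∈ L2, (pp : WithTop ℕ) ≤ C.min := by
      have h0 := List.head?_dropWhile_not pred L
      rw [← hL2def] at h0
      have hmm := hmins.sublist (List.dropWhile_sublist pred)
      rw [← hL2def] at hmm
      intro C hC
      cases hL : L2 with
      | nil => rw [hL] at hC; simp at hC
      | cons C0 L2t =>
        rw [hL] at h0 hC hmm
        simp only [List.head?_cons] at h0
        have h0n : ¬ (C0.min < (pp : WithTop ℕ)) := by simpa [hpred] using h0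
        rcases List.mem_cons.1 hC with rfl | hCt
        · exact le_of_not_gt h0n
        · have := (List.pairwise_cons.1 hmm).1 C hCt
          exact le_of_lt (lt_of_le_of_lt (le_of_not_gt h0n) this)
    have hB : ∀ C ∈ L2, ∀ y ∈ C, pp < y ∧ y < e := by
      intro C hC y hy
      have hCL := hsub2 C hC
      refine ⟨?_, (hLU C hCL y hy).2⟩
      have hc1 : (pp : WithTop ℕ) ≤ (y : WithTop ℕ) := le_trans (hnotpred C hC) (Finset.min_le hy)
      have hc2 : pp ≤ y := by exact_mod_cast hc1
      have hyp : y ≠ pp := fun h => hdisj2 C hCL pp (by simp) (h ▸ hy)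
      omega
    have hU1 : unionL L1 = Finset.Ico (o+1) pp := by
      apply Finset.ext
      intro x
      simp only [Finset.mem_Ico]
      constructor
      · intro hx
        obtain ⟨B, hB1, hxB⟩ := mem_unionL.1 hx
        have := hA B hB1 x hxB
        omega
      · intro hx
        have hx2 : x ∈ Finset.Ico o e := by simp only [Finset.mem_Ico]; omega
        rw [← huni] at hx2
        rcases Finset.mem_union.1 hx2 with h | h
        · exfalso
          simp only [List.toFinset_cons, Finset.mem_insert, List.mem_toFinset] at h
          rcases h with rfl | rfl | h
          · omega
          · omega
          · have := hqlb x h; omega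
        · rw [← hsplit, unionL_append] at h
          rcases Finset.mem_union.1 h with h | h
          · exact h
          · exfalso
            obtain ⟨B, hB1, hxB⟩ := mem_unionL.1 h
            have := hB B hB1 x hxB
            omega
    obtain ⟨t, ht1, ht2⟩ := H (pp - o - 1) o L1 (by omega)
      ⟨fun B hB => hne B (hsub1 B hB), hdisj.sublist (List.takeWhile_sublist pred),
       by rw [hU1]; congr 1; omega,
       hmins.sublist (List.takeWhile_sublist pred), ncl_sublist hsub1 hncl⟩
    have huni2 : ((pp :: qq).toFinset ∪ unionL L2 = Finset.Ico pp e) := by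
      apply Finset.ext
      intro x
      simp only [Finset.mem_Ico]
      constructor
      · intro hx
        rcases Finset.mem_union.1 hx with h | h
        · simp only [List.toFinset_cons, Finset.mem_insert, List.mem_toFinset] at h
          rcases h with rfl | h
          · omega
          · have hb1 := hqlb x h
            have hb2 := he x (by simp [h])
            omega
        · obtain ⟨B, hB1, hxB⟩ := mem_unionL.1 h
          have := hB B hB1 x hxB
          omega
      · intro hx
        have hx2 : x ∈ Finset.Ico o e := by simp only [Finset.mem_Ico]; omega
        rw [← huni] at hx2
        rcases Finset.mem_union.1 hx2 with h | h
        · simp only [List.toFinset_cons, Finset.mem_insert, List.mem_toFinset] at h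
          rcases h with rfl | rfl | h
          · exfalso; omega
          · exact Finset.mem_union_left _ (by simp)
          · exact Finset.mem_union_left _ (by simp [h])
        · rw [← hsplit, unionL_append] at h
          rcases Finset.mem_union.1 h with h | h
          · exfalso
            obtain ⟨B, hB1, hxB⟩ := mem_unionL.1 h
            have := hA B hB1 x hxB
            omega
          · exact Finset.mem_union_right _ h
    obtain ⟨ts, hcp, hbl, hsz⟩ := ih pp e L2
      ((List.pairwise_cons.1 hsort).2)
      (fun x hx => he x (by simp at hx ⊢; tauto))
      (by omega)
      (fun B hB => hne B (hsub2 B hB))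
      (hdisj.sublist (List.dropWhile_sublist pred))
      huni2
      (fun B hB x hx => hdisj2 B (hsub2 B hB) x (by simp at hx ⊢; tauto))
      (hmins.sublist (List.dropWhile_sublist pred))
      (ncl_sublist hsub2 hncl)
      (fun C hC y hy w hw p hp => hgap C (hsub2 C hC) y hy w hw p (by simp at hp ⊢; tauto))
    have htp : o + tsize t = pp := by rw [ht1]; omega
    refine ⟨t :: ts, ?_, ?_, ?_⟩
    · rw [chPos, htp, hcp]
    · rw [blocksL, htp, hbl, ht2, hsplit]
    · rw [tsizeL]
      omega

theorem recon : ∀ m o (L : List (Finset ℕ)), Cond o m L →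
    ∃ t, tsize t = m + 1 ∧ blocks t o = L := by
  intro m
  induction m using Nat.strong_induction_on with
  | _ m H =>
  intro o L hc
  obtain ⟨hne, hdisj, huni, hmins, hncl⟩ := hc
  cases L with
  | nil =>
    have hm : m = 0 := by
      by_contra hm
      have : o + 1 ∈ Finset.Ico (o+1) (o+1+m) := by simp only [Finset.mem_Ico]; omega
      rw [← huni] at this
      simp at this
    refine ⟨node [], by simp [tsize, tsizeL, hm], by simp [blocks]⟩
  | cons B₀ L' =>
    have hB₀ne : B₀.Nonempty := hne B₀ (by simp)
    have hm1 : 1 ≤ m := by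
      obtain ⟨x, hx⟩ := hB₀ne
      have : x ∈ Finset.Ico (o+1) (o+1+m) := by
        rw [← huni]; exact mem_unionL.2 ⟨B₀, by simp, hx⟩
      simp only [Finset.mem_Ico] at this; omega
    have hbnd : ∀ C ∈ B₀ :: L', ∀ y ∈ C, o + 1 ≤ y ∧ y < o+1+m := by
      intro C hC y hy
      have : y ∈ Finset.Ico (o+1) (o+1+m) := by
        rw [← huni]; exact mem_unionL.2 ⟨C, hC, hy⟩
      simpa only [Finset.mem_Ico] using this
    have hneq : ∀ C ∈ L', B₀ ≠ C := by
      intro C hC heq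
      have hd : Disjoint B₀ C := (List.pairwise_cons.1 hdisj).1 C hC
      obtain ⟨x, hx⟩ := hB₀ne
      exact Finset.disjoint_left.1 hd hx (heq ▸ hx)
    have h1 : o + 1 ∈ B₀ := by
      have : o + 1 ∈ Finset.Ico (o+1) (o+1+m) := by simp only [Finset.mem_Ico]; omega
      rw [← huni] at this
      obtain ⟨C, hC, hxC⟩ := mem_unionL.1 this
      rcases List.mem_cons.1 hC with rfl | hCt
      · exact hxC
      · exfalso
        have hlt : B₀.min < C.min := (List.pairwise_cons.1 hmins).1 C hCt
        have h2 : C.min ≤ (↑(o+1) : WithTop ℕ) := Finset.min_le hxC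
        have h3 : (↑(o+1) : WithTop ℕ) ≤ B₀.min :=
          Finset.le_min (fun y hy => by
            have hb := (hbnd B₀ (by simp) y hy).1
            exact WithTop.coe_le_coe.2 hb)
        exact absurd (lt_of_lt_of_le (lt_of_lt_of_le hlt h2) h3) (lt_irrefl _)
    set q' := (B₀.erase (o+1)).sort (· ≤ ·) with hq'
    have hq'mem : ∀ x ∈ q', x ∈ B₀ ∧ o+1 < x := by
      intro x hx
      rw [hq', Finset.mem_sort] at hx
      have h2 := Finset.mem_of_mem_erase hx
      have h3 := Finset.ne_of_mem_erase hx
      have := (hbnd B₀ (by simp) x h2).1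
      exact ⟨h2, by omega⟩
    have hsorted : ((o+1) :: q').Pairwise (· < ·) := by
      rw [List.pairwise_cons]
      exact ⟨fun x hx => (hq'mem x hx).2, (Finset.sortedLT_sort _).pairwise⟩
    have htf : ((o+1) :: q').toFinset = B₀ := by
      rw [List.toFinset_cons, hq', Finset.sort_toFinset, Finset.insert_erase h1]
    have hdB₀ : ∀ B ∈ L', ∀ x ∈ (o+1) :: q', x ∉ B := by
      intro B hB x hx
      have hxB₀ : x ∈ B₀ := by
        rcases List.mem_cons.1 hx with rfl | hx'
        · exact h1
        · exact (hq'mem x hx').1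
      have hd : Disjoint B₀ B := (List.pairwise_cons.1 hdisj).1 B hB
      exact Finset.disjoint_left.1 hd hxB₀
    obtain ⟨ts, hcp, hbl, hts⟩ := inner m (fun m' o L hm' hc => H m' hm' o L hc) q' (o+1) (o+1+m) L'
      hsorted
      (fun x hx => by
        have hxB₀ : x ∈ B₀ := by
          rcases List.mem_cons.1 hx with rfl | hx'
          · exact h1
          · exact (hq'mem x hx').1
        exact (hbnd B₀ (by simp) x hxB₀).2)
      (by omega)
      (fun B hB => hne B (by simp [hB]))
      ((List.pairwise_cons.1 hdisj).2)
      (by rw [htf]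
          have he2 : B₀ ∪ unionL L' = unionL (B₀ :: L') := rfl
          rw [he2, huni])
      hdB₀
      ((List.pairwise_cons.1 hmins).2)
      (ncl_sublist (fun C hC => by simp [hC]) hncl)
      (fun C hC y hy w hw p hp hyw => by
        have hpB₀ : p ∈ B₀ := by
          rcases List.mem_cons.1 hp with rfl | hp'
          · exact h1
          · exact (hq'mem p hp').1
        have hy1 : o + 1 ≤ y := (hbnd C (by simp [hC]) y hy).1
        have hyne : y ≠ o + 1 := by
          intro h
          exact hdB₀ C hC (o+1) (by simp) (h ▸ hy)
        exact hncl B₀ (by simp) C (by simp [hC]) (hneq C hC)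
          ⟨o+1, y, p, w, by omega, hyw.1, hyw.2, h1, hpB₀, hy, hw⟩)
    cases ts with
    | nil => rw [chPos] at hcp; simp at hcp
    | cons u us =>
      refine ⟨node (u :: us), ?_, ?_⟩
      · rw [tsize]
        rw [tsizeL] at hts ⊢
        omega
      · rw [blocks, hcp, htf, hbl]

theorem minlt_of_sr {B C : Finset ℕ} (hC : C.Nonempty) (h : SR B C) : B.min < C.min := by
  obtain ⟨x, hx, hall⟩ := h
  have h1 : B.min ≤ ↑x := Finset.min_le hx
  have h2 : x < C.min' hC := (Finset.lt_min'_iff C hC).2 hall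
  have h3 : (↑x : WithTop ℕ) < ↑(C.min' hC) := WithTop.coe_lt_coe.2 h2
  rw [← Finset.coe_min' hC]
  exact lt_of_le_of_lt h1 h3

theorem minpw_blocks (t : PTree) (o : ℕ) :
    (blocks t o).Pairwise (fun B C => B.min < C.min) := by
  refine (sr_blocks t o).imp_of_mem ?_
  intro B C hB hC h
  exact minlt_of_sr (blocks_nonempty hC) h

theorem nodup_of_minpw {L : List (Finset ℕ)} (h : L.Pairwise (fun B C => B.min < C.min)) :
    L.Nodup :=
  h.imp (fun hlt he => absurd (he ▸ hlt) (lt_irrefl _))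

theorem sorted_unique {L M : List (Finset ℕ)}
    (hL : L.Pairwise (fun B C => B.min < C.min)) (hM : M.Pairwise (fun B C => B.min < C.min))
    (h : L.toFinset = M.toFinset) : L = M := by
  have hn1 := nodup_of_minpw hL
  have hn2 := nodup_of_minpw hM
  have hperm : List.Perm L M := by
    have := List.toFinset_eq_iff_perm_dedup.1 h
    rwa [hn1.dedup, hn2.dedup] at this
  haveI : Std.Antisymm (fun B C : Finset ℕ => B.min < C.min) :=
    ⟨fun a b h1 h2 => absurd (h1.trans h2) (lt_irrefl _)⟩
  exact List.Perm.eq_of_pairwise' hL hM hperm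

theorem unionL_eq_sup (L : List (Finset ℕ)) : unionL L = L.toFinset.sup id := by
  rw [← List.foldr_sup_eq_sup_toFinset]
  rfl

end PTree

/-- A finite partition is noncrossing if there are no `x < y < z < w` with `x, z` in one
block and `y, w` in a different block. -/
def Noncrossing {n : ℕ} (π : Finpartition (Finset.Icc 1 n)) : Prop :=
  ¬ ∃ B₁ ∈ π.parts, ∃ B₂ ∈ π.parts, B₁ ≠ B₂ ∧
    ∃ x y z w : ℕ, x < y ∧ y < z ∧ z < w ∧ x ∈ B₁ ∧ z ∈ B₁ ∧ y ∈ B₂ ∧ w ∈ B₂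

/-- `L` is the list of blocks of `π` ordered by increasing minima. -/
def SortedBlocks {n : ℕ} (π : Finpartition (Finset.Icc 1 n)) (L : List (Finset ℕ)) : Prop :=
  L.Nodup ∧ L.toFinset = π.parts ∧ L.Pairwise (fun B C => B.min < C.min)

/-- `sizes` is obtained from the composition `v` by summing adjacent entries,
i.e. `v` refines `sizes`. -/
def Refines (v sizes : List ℕ) : Prop :=
  ∃ chunks : List (List ℕ), (∀ c ∈ chunks, c ≠ []) ∧ chunks.flatten = v ∧
    chunks.map List.sum = sizes

/-- For every composition `s`, the set of `s`-trees is in bijection with the set of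
complete noncrossing `s`-matchings: noncrossing partitions of `[|s|]` whose blocks,
ordered by increasing minima, have sizes `s(1), …, s(a)`. -/
theorem sTrees_equiv_matchings (s : List ℕ) (hs : ∀ x ∈ s, 0 < x) :
    Nonempty ({T : PTree // T.signature = s} ≃
      {π : Finpartition (Finset.Icc 1 s.sum) // Noncrossing π ∧
        ∃ L : List (Finset ℕ), SortedBlocks π L ∧ L.map Finset.card = s}) := by
  classical
  have hsup : ∀ T : PTree, T.signature = s →
      (PTree.blocks T 0).toFinset.sup id = Finset.Icc 1 s.sum := by
    intro T hT
    rw [← PTree.unionL_eq_sup, PTree.unionL_blocks, PTree.tsize_eq, hT]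
    rw [← Finset.Ico_add_one_right_eq_Icc]
    congr 1
    omega
  let f : {T : PTree // T.signature = s} →
      {π : Finpartition (Finset.Icc 1 s.sum) // Noncrossing π ∧
        ∃ L : List (Finset ℕ), SortedBlocks π L ∧ L.map Finset.card = s} := fun T =>
    ⟨⟨(PTree.blocks T.1 0).toFinset,
      by
        rw [Finset.supIndep_iff_pairwiseDisjoint]
        intro B hB C hC hne
        simp only [Finset.mem_coe, List.mem_toFinset] at hB hC
        exact (List.Pairwise.forall
          (PTree.pd_blocks T.1 0)) hB hC hne,
      hsup T.1 T.2,
      by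
        simp only [Finset.bot_eq_empty, List.mem_toFinset]
        intro h
        exact (PTree.blocks_nonempty h).ne_empty rfl⟩,
      by
        rintro ⟨B₁, hB₁, B₂, hB₂, hne, x, y, z, w, h1, h2, h3, hx, hz, hy, hw⟩
        simp only [List.mem_toFinset] at hB₁ hB₂
        exact PTree.ncl_blocks T.1 0 B₁ hB₁ B₂ hB₂ hne ⟨x, y, z, w, h1, h2, h3, hx, hz, hy, hw⟩,
      PTree.blocks T.1 0,
      ⟨PTree.nodup_of_minpw (PTree.minpw_blocks T.1 0), rfl, PTree.minpw_blocks T.1 0⟩,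
      by rw [PTree.card_blocks, T.2]⟩
  refine ⟨Equiv.ofBijective f ⟨?_, ?_⟩⟩
  · intro T₁ T₂ h
    apply Subtype.ext
    have hp : (PTree.blocks T₁.1 0).toFinset = (PTree.blocks T₂.1 0).toFinset :=
      congrArg (fun x => x.1.parts) h
    exact PTree.blocks_inj T₁.1 T₂.1 0
      (PTree.sorted_unique (PTree.minpw_blocks T₁.1 0) (PTree.minpw_blocks T₂.1 0) hp)
  · rintro ⟨π, hnc, L, ⟨hnod, htf, hpw⟩, hcard⟩
    have hmem : ∀ B ∈ L, B ∈ π.parts := fun B hB => htf ▸ List.mem_toFinset.2 hB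
    have hcond : PTree.Cond 0 s.sum L := by
      refine ⟨?_, ?_, ?_, hpw, ?_⟩
      · intro B hB
        rcases Finset.eq_empty_or_nonempty B with rfl | h
        · exact absurd (hmem _ hB) π.bot_notMem
        · exact h
      · refine hnod.pairwise_of_forall_ne ?_
        intro B hB C hC hne
        exact (Finset.supIndep_iff_pairwiseDisjoint.1 π.supIndep)
          (hmem B hB) (hmem C hC) hne
      · rw [PTree.unionL_eq_sup, htf, π.sup_parts, ← Finset.Ico_add_one_right_eq_Icc]
        congr 1
        omega
      · intro B hB C hC hne hcr
        obtain ⟨x, y, z, w, h1, h2, h3, hx, hz, hy, hw⟩ := hcr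
        exact hnc ⟨B, hmem B hB, C, hmem C hC, hne, x, y, z, w, h1, h2, h3, hx, hz, hy, hw⟩
    obtain ⟨t, hts, hbl⟩ := PTree.recon s.sum 0 L hcond
    have hsig : t.signature = s := by rw [← PTree.card_blocks t 0, hbl, hcard]
    refine ⟨⟨t, hsig⟩, ?_⟩
    apply Subtype.ext
    apply Finpartition.ext
    show (PTree.blocks t 0).toFinset = π.parts
    rw [hbl, htf]
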